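/- (Lemma 2, case 2 with μ < 1.) Let μ ∈ (0,1), ν ∈ (0,1), w_c, w_d > 0 with w_c + w_d = 1, and assume μ + ν > 1 and w_c/μ ≥ w_d/ν. Define f(p,β) = w_c ln(pμ + (1−p)β) + w_d ln(pν + (1−p)(1−β)). Let p* = min{ w_d/(1−μ), 1 }. Then for all (p,β) ∈ [0,1]² with pμ + (1−p)β > 0 and pν + (1−p)(1−β) > 0, we have f(p,β) ≤ f(p*, 1). -/
import Mathlib

/-- Key polynomial inequality: if (xs, ys) satisfies the stationarity-type
condition `wc*μ*ys + wd*ν*xs = xs*ys` together with `wc ≤ xs`, `wd ≤ ys`,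
then the linearized objective at any feasible (p, β) is nonpositive. -/
lemma aux_key (μ ν wc wd p β xs ys : ℝ)
    (hw : wc + wd = 1)
    (hp0 : 0 ≤ p) (hp1 : p ≤ 1) (hβ0 : 0 ≤ β) (hβ1 : β ≤ 1)
    (hxs : 0 < xs) (hys : 0 < ys)
    (H1 : wc * μ * ys + wd * ν * xs = xs * ys) (H2 : wc ≤ xs) (H3 : wd ≤ ys) :
    wc * ((p * μ + (1 - p) * β) - xs) * ys
      + wd * ((p * ν + (1 - p) * (1 - β)) - ys) * xs ≤ 0 := by
  have h1 : 0 ≤ (1 - p) * β * ((xs - wc) * ys) := by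
    apply mul_nonneg (mul_nonneg (by linarith) hβ0)
    exact mul_nonneg (by linarith) hys.le
  have h2 : 0 ≤ (1 - p) * (1 - β) * ((ys - wd) * xs) := by
    apply mul_nonneg (mul_nonneg (by linarith) (by linarith))
    exact mul_nonneg (by linarith) hxs.le
  have H1p : p * (wc * μ * ys + wd * ν * xs) = p * (xs * ys) := by rw [H1]
  have Hw2 : (wc + wd) * (xs * ys) = xs * ys := by rw [hw]; ring
  nlinarith [h1, h2, H1p, Hw2]

/-- Linearization step: concavity of `log` turns the polynomial inequality
into the desired comparison of objective values. -/
lemma log_step (wc wd x y xs ys : ℝ) (hwc : 0 < wc) (hwd : 0 < wd)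
    (hx : 0 < x) (hy : 0 < y) (hxs : 0 < xs) (hys : 0 < ys)
    (key : wc * (x - xs) * ys + wd * (y - ys) * xs ≤ 0) :
    wc * Real.log x + wd * Real.log y ≤ wc * Real.log xs + wd * Real.log ys := by
  have h1 : Real.log x - Real.log xs ≤ x / xs - 1 := by
    rw [← Real.log_div hx.ne' hxs.ne']
    exact Real.log_le_sub_one_of_pos (div_pos hx hxs)
  have h2 : Real.log y - Real.log ys ≤ y / ys - 1 := by
    rw [← Real.log_div hy.ne' hys.ne']
    exact Real.log_le_sub_one_of_pos (div_pos hy hys)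
  have h3 : wc * (x / xs - 1) + wd * (y / ys - 1) ≤ 0 := by
    have e : wc * (x / xs - 1) + wd * (y / ys - 1)
        = (wc * (x - xs) * ys + wd * (y - ys) * xs) / (xs * ys) := by
      field_simp
    rw [e]
    exact div_nonpos_of_nonpos_of_nonneg key (mul_pos hxs hys).le
  nlinarith [mul_le_mul_of_nonneg_left h1 hwc.le, mul_le_mul_of_nonneg_left h2 hwd.le, h3]

theorem stmt_10 (μ ν wc wd : ℝ) (hμ : μ ∈ Set.Ioo (0 : ℝ) 1) (hν : ν ∈ Set.Ioo (0 : ℝ) 1)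
    (hwc : 0 < wc) (hwd : 0 < wd) (hw : wc + wd = 1)
    (hgain : 1 < μ + ν) (hratio : wd / ν ≤ wc / μ) :
    ∀ p ∈ Set.Icc (0 : ℝ) 1, ∀ β ∈ Set.Icc (0 : ℝ) 1,
      0 < p * μ + (1 - p) * β → 0 < p * ν + (1 - p) * (1 - β) →
      wc * Real.log (p * μ + (1 - p) * β) + wd * Real.log (p * ν + (1 - p) * (1 - β))
        ≤ wc * Real.log (min (wd / (1 - μ)) 1 * μ + (1 - min (wd / (1 - μ)) 1) * 1)
          + wd * Real.log (min (wd / (1 - μ)) 1 * ν + (1 - min (wd / (1 - μ)) 1) * (1 - 1)) := by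
  obtain ⟨hμ0, hμ1⟩ := hμ
  obtain ⟨hν0, hν1⟩ := hν
  have h1μ : (0 : ℝ) < 1 - μ := by linarith
  have hμν : wd * μ ≤ wc * ν := by
    rw [div_le_div_iff₀ hν0 hμ0] at hratio
    linarith
  intro p hp β hβ hx hy
  obtain ⟨hp0, hp1⟩ := hp
  obtain ⟨hβ0, hβ1⟩ := hβ
  rcases le_or_gt (wd / (1 - μ)) 1 with h | h
  · rw [min_eq_left h]
    set q := wd / (1 - μ) with hq
    have hqw : q * (1 - μ) = wd := div_mul_cancel₀ wd h1μ.ne'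
    have hq0 : 0 < q := div_pos hwd h1μ
    have exs : q * μ + (1 - q) * 1 = wc := by linear_combination -hqw - hw
    have eys : q * ν + (1 - q) * (1 - 1) = q * ν := by ring
    rw [exs, eys]
    have hys : 0 < q * ν := mul_pos hq0 hν0
    have H3 : wd ≤ q * ν := by
      nlinarith [mul_pos hq0 (show (0 : ℝ) < μ + ν - 1 by linarith)]
    have H1 : wc * μ * (q * ν) + wd * ν * wc = wc * (q * ν) := by
      linear_combination (-(wc * ν)) * hqw
    exact log_step wc wd _ _ wc (q * ν) hwc hwd hx hy hwc hys
      (aux_key μ ν wc wd p β wc (q * ν) hw hp0 hp1 hβ0 hβ1 hwc hys H1 le_rfl H3)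
  · rw [min_eq_right h.le]
    have exs : (1 : ℝ) * μ + (1 - 1) * 1 = μ := by ring
    have eys : (1 : ℝ) * ν + (1 - 1) * (1 - 1) = ν := by ring
    rw [exs, eys]
    have hwd1 : 1 - μ ≤ wd := by
      have := (le_div_iff₀ h1μ).1 h.le
      linarith
    have H2 : wc ≤ μ := by linarith
    have H3 : wd ≤ ν := by nlinarith
    have H1 : wc * μ * ν + wd * ν * μ = μ * ν := by linear_combination (μ * ν) * hw
    exact log_step wc wd _ _ μ ν hwc hwd hx hy hμ0 hν0
      (aux_key μ ν wc wd p β μ ν hw hp0 hp1 hβ0 hβ1 hμ0 hν0 H1 H2 H3)
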